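/- Let f : 2^N → ℝ be monotone, submodular and 3-increasing with f(∅) = 0, let each element of N have a positive cost, and let γ > 1. Let π be a permutation of N that has no swaps and no γ-moves with respect to the weighted coverage mff_π. Then for every integer ℓ > 0 and every set S* ⊆ N with f(S*) = f(N), the level L_ℓ := {u ∈ N : γ^ℓ ≤ mff_π(u) < γ^{ℓ+1}} satisfies c(L_ℓ) ≤ γ² · c(S*). -/

import Mathlib

open Finset

/-- The marginal value `f(A | C) := f(A ∪ C) - f(C)` of a set function. -/
def margS {V : Type*} [DecidableEq V] (f : Finset V → ℝ) (A C : Finset V) : ℝ :=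
  f (A ∪ C) - f C

/-- The conditional mutual coverage `I_f(A; B | C) := f(A|C) + f(B|C) - f(A ∪ B | C)`. -/
def mutcov {V : Type*} [DecidableEq V] (f : Finset V → ℝ) (A B C : Finset V) : ℝ :=
  margS f A C + margS f B C - margS f (A ∪ B) C

/-- The derivative of a set function `f` with respect to a set `A`:
`(df/dA)(S) := ∑_{B ⊆ A} (−1)^{|B|} f((S ∪ A) \ B)`. -/
def setDeriv {V : Type*} [DecidableEq V] (f : Finset V → ℝ) (A S : Finset V) : ℝ :=
  ∑ B ∈ A.powerset, (-1 : ℝ) ^ B.card * f ((S ∪ A) \ B)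

/-- The prefix `π_{1:i}` of a permutation `π` (0-indexed: the set of the first `i` elements). -/
def pref {V : Type*} [DecidableEq V] {n : ℕ} (π : Fin n → V) (i : ℕ) : Finset V :=
  (Finset.univ.filter fun j : Fin n => (j : ℕ) < i).image π

/-- The `(i,j)` mutual affinity of the pair of permutations `(α, β)`:
`I_{α,β}(α_i, β_j) := I_f(α_i; β_j | α_{1:i−1} ∪ β_{1:j−1})`. -/
def mfI {V : Type*} [DecidableEq V] {n : ℕ} (f : Finset V → ℝ) (a b : Fin n → V)
    (i j : Fin n) : ℝ :=
  mutcov f {a i} {b j} (pref a i ∪ pref b j)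

/-- The weighted coverage `mff_π(π_i) := ∑_j I_{π,ψ}(π_i, ψ_j) / (c(π_i)·c(ψ_j))`. -/
noncomputable def mffw {V : Type*} [Fintype V] [DecidableEq V] {n : ℕ} (f : Finset V → ℝ)
    (c : V → ℝ) (π ψ : Fin n → V) (i : Fin n) : ℝ :=
  ∑ j : Fin n, mfI f π ψ i j / (c (π i) * c (ψ j))

/-- The weighted coverage that the element `π_q` would have after being moved to position
`p`, i.e. `mff_{π′}(π′_p)` where `π′` is obtained from `π` by moving `π_q` to position `p`
(the prefix of `π′` at position `p` is `π_{1:p−1}`). -/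
noncomputable def mffwMove {V : Type*} [Fintype V] [DecidableEq V] {n : ℕ}
    (f : Finset V → ℝ) (c : V → ℝ) (π ψ : Fin n → V) (p q : Fin n) : ℝ :=
  ∑ j : Fin n, mutcov f {π q} {ψ j} (pref π p ∪ pref ψ j) / (c (π q) * c (ψ j))

section Lemmas

variable {V : Type*} [DecidableEq V] (f : Finset V → ℝ)

lemma margS_nonneg (hmono : ∀ A B : Finset V, A ⊆ B → f A ≤ f B) (A C : Finset V) :
    0 ≤ margS f A C := by
  have := hmono C (A ∪ C) subset_union_right
  simp only [margS]; linarith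

lemma mutcov_nonneg (hmono : ∀ A B : Finset V, A ⊆ B → f A ≤ f B)
    (hsub : ∀ A B : Finset V, f (A ∪ B) + f (A ∩ B) ≤ f A + f B)
    (a b : V) (C : Finset V) : 0 ≤ mutcov f {a} {b} C := by
  have h1 := hsub ({a} ∪ C) ({b} ∪ C)
  have h2 : f C ≤ f (({a} ∪ C) ∩ ({b} ∪ C)) :=
    hmono _ _ (subset_inter (subset_union_right) (subset_union_right))
  have h3 : ({a} ∪ C) ∪ ({b} ∪ C) = ({a} ∪ {b}) ∪ C := by
    ext y; simp; tauto
  rw [h3] at h1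
  simp only [mutcov, margS]
  linarith

lemma mutcov_eq_sub (a b : V) (C : Finset V) :
    mutcov f {a} {b} C = margS f {b} C - margS f {b} (insert a C) := by
  have h1 : ({b} : Finset V) ∪ ({a} ∪ C) = ({a} ∪ {b}) ∪ C := by ext y; simp
  have h2 : insert a C = {a} ∪ C := by ext y; simp
  simp only [mutcov, margS, h2, h1]; ring

lemma mutcov_zero_of_mem (a b : V) (C : Finset V) (ha : a ∈ C) :
    mutcov f {a} {b} C = 0 := by
  rw [mutcov_eq_sub, insert_eq_self.2 ha, sub_self]

lemma mutcov_comm (a b : V) (C : Finset V) : mutcov f {a} {b} C = mutcov f {b} {a} C := by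
  simp only [mutcov, margS, union_comm ({a} : Finset V) {b}]; ring

lemma sd_e0 {V : Type*} [DecidableEq V] (a b x : V) (C : Finset V) (ha : a ∉ C) (hb : b ∉ C)
    (hx : x ∉ C) (hab : a ≠ b) (hax : a ≠ x) (hbx : b ≠ x) : (C ∪ {a, b, x}) \ ∅ = insert a (insert b (insert x C)) := by
  ext y; by_cases h1 : y = a <;> by_cases h2 : y = b <;> by_cases h3 : y = x <;> simp_all

lemma sd_ex {V : Type*} [DecidableEq V] (a b x : V) (C : Finset V) (ha : a ∉ C) (hb : b ∉ C)
    (hx : x ∉ C) (hab : a ≠ b) (hax : a ≠ x) (hbx : b ≠ x) : (C ∪ {a, b, x}) \ {x} = insert a (insert b C) := by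
  ext y; by_cases h1 : y = a <;> by_cases h2 : y = b <;> by_cases h3 : y = x <;> simp_all

lemma sd_eb {V : Type*} [DecidableEq V] (a b x : V) (C : Finset V) (ha : a ∉ C) (hb : b ∉ C)
    (hx : x ∉ C) (hab : a ≠ b) (hax : a ≠ x) (hbx : b ≠ x) : (C ∪ {a, b, x}) \ {b} = insert a (insert x C) := by
  ext y; by_cases h1 : y = a <;> by_cases h2 : y = b <;> by_cases h3 : y = x <;> simp_all

lemma sd_ebx {V : Type*} [DecidableEq V] (a b x : V) (C : Finset V) (ha : a ∉ C) (hb : b ∉ C)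
    (hx : x ∉ C) (hab : a ≠ b) (hax : a ≠ x) (hbx : b ≠ x) : (C ∪ {a, b, x}) \ {b, x} = insert a C := by
  ext y; by_cases h1 : y = a <;> by_cases h2 : y = b <;> by_cases h3 : y = x <;> simp_all

lemma sd_ea {V : Type*} [DecidableEq V] (a b x : V) (C : Finset V) (ha : a ∉ C) (hb : b ∉ C)
    (hx : x ∉ C) (hab : a ≠ b) (hax : a ≠ x) (hbx : b ≠ x) : (C ∪ {a, b, x}) \ {a} = insert b (insert x C) := by
  ext y; by_cases h1 : y = a <;> by_cases h2 : y = b <;> by_cases h3 : y = x <;> simp_all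

lemma sd_eax {V : Type*} [DecidableEq V] (a b x : V) (C : Finset V) (ha : a ∉ C) (hb : b ∉ C)
    (hx : x ∉ C) (hab : a ≠ b) (hax : a ≠ x) (hbx : b ≠ x) : (C ∪ {a, b, x}) \ {a, x} = insert b C := by
  ext y; by_cases h1 : y = a <;> by_cases h2 : y = b <;> by_cases h3 : y = x <;> simp_all

lemma sd_eab {V : Type*} [DecidableEq V] (a b x : V) (C : Finset V) (ha : a ∉ C) (hb : b ∉ C)
    (hx : x ∉ C) (hab : a ≠ b) (hax : a ≠ x) (hbx : b ≠ x) : (C ∪ {a, b, x}) \ {a, b} = insert x C := by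
  ext y; by_cases h1 : y = a <;> by_cases h2 : y = b <;> by_cases h3 : y = x <;> simp_all

lemma sd_eabx {V : Type*} [DecidableEq V] (a b x : V) (C : Finset V) (ha : a ∉ C) (hb : b ∉ C)
    (hx : x ∉ C) (hab : a ≠ b) (hax : a ≠ x) (hbx : b ≠ x) : (C ∪ {a, b, x}) \ {a, b, x} = C := by
  ext y; by_cases h1 : y = a <;> by_cases h2 : y = b <;> by_cases h3 : y = x <;> simp_all

lemma setDeriv_tri (a b x : V) (C : Finset V) (ha : a ∉ C) (hb : b ∉ C) (hx : x ∉ C)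
    (hab : a ≠ b) (hax : a ≠ x) (hbx : b ≠ x) :
    setDeriv f {a,b,x} C = mutcov f {a} {b} C - mutcov f {a} {b} (insert x C) := by
  have hax' : a ∉ (insert b {x} : Finset V) := by simp [hab, hax]
  have hbx' : b ∉ (insert x ∅ : Finset V) := by simp [hbx]
  have hx0 : x ∉ (∅ : Finset V) := by simp
  rw [setDeriv, show ({a,b,x} : Finset V) = insert a (insert b {x}) from rfl,
    Finset.sum_powerset_insert hax', show ({x} : Finset V) = insert x ∅ by simp,
    Finset.sum_powerset_insert hbx', Finset.sum_powerset_insert hbx',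
    Finset.sum_powerset_insert hx0, Finset.sum_powerset_insert hx0,
    Finset.sum_powerset_insert hx0, Finset.sum_powerset_insert hx0]
  simp only [Finset.powerset_empty, Finset.sum_singleton]
  have hie : ∀ y : V, (insert y ∅ : Finset V) = {y} := fun _ => rfl
  simp only [hie]
  rw [sd_e0 a b x C ha hb hx hab hax hbx, sd_ex a b x C ha hb hx hab hax hbx,
    sd_eb a b x C ha hb hx hab hax hbx, sd_ebx a b x C ha hb hx hab hax hbx,
    sd_ea a b x C ha hb hx hab hax hbx, sd_eax a b x C ha hb hx hab hax hbx,
    sd_eab a b x C ha hb hx hab hax hbx, sd_eabx a b x C ha hb hx hab hax hbx]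
  have c1 : (insert b ({x} : Finset V)).card = 2 := by
    rw [card_insert_of_notMem (by simp [hbx])]; simp
  have c2 : (insert a ({x} : Finset V)).card = 2 := by
    rw [card_insert_of_notMem (by simp [hax])]; simp
  have c3 : (insert a ({b} : Finset V)).card = 2 := by
    rw [card_insert_of_notMem (by simp [hab])]; simp
  have c4 : (insert a (insert b ({x} : Finset V))).card = 3 := by
    rw [card_insert_of_notMem (by simp [hab, hax]), c1]
  have su : ∀ (y : V) (D : Finset V), {y} ∪ D = insert y D := fun y D => by
    ext z; simp
  simp only [card_empty, card_singleton, c1, c2, c3, c4, mutcov, margS, su, insert_union]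
  ring

section Mono
variable (hmono : ∀ A B : Finset V, A ⊆ B → f A ≤ f B)
  (hsub : ∀ A B : Finset V, f (A ∪ B) + f (A ∩ B) ≤ f A + f B)
  (h3 : ∀ (S A : Finset V), A.card = 3 → 0 ≤ setDeriv f A S)

include hmono hsub in
lemma margS_insert_le (a x : V) (C : Finset V) :
    margS f {a} (insert x C) ≤ margS f {a} C := by
  by_cases hxC : x ∈ C
  · rw [insert_eq_self.2 hxC]
  by_cases haC : a ∈ insert x C
  · have h1 : ({a} : Finset V) ∪ insert x C = insert x C := by
      rw [union_comm, union_eq_left, singleton_subset_iff]; exact haC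
    rw [margS, h1, sub_self]
    exact margS_nonneg f hmono {a} C
  · have haC' : a ∉ C := fun h => haC (mem_insert_of_mem h)
    have hax : a ≠ x := fun h => haC (h ▸ mem_insert_self x C)
    have h1 := hsub (insert a C) (insert x C)
    have hu : insert a C ∪ insert x C = ({a} ∪ insert x C) := by ext y; simp
    have hi : insert a C ∩ insert x C = C := by
      ext y; simp only [mem_inter, mem_insert]
      constructor
      · rintro ⟨h1 | h1, h2 | h2⟩
        · exact absurd (h1.symm.trans h2) hax
        · exact absurd (h1 ▸ h2) haC'
        · exact absurd (h2 ▸ h1) hxC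
        · exact h1
      · exact fun h => ⟨Or.inr h, Or.inr h⟩
    rw [hu, hi] at h1
    have h2 : ({a} : Finset V) ∪ C = insert a C := by ext y; simp
    simp only [margS, h2]
    linarith

include hmono hsub h3 in
lemma mutcov_insert_le (a b x : V) (C : Finset V) :
    mutcov f {a} {b} (insert x C) ≤ mutcov f {a} {b} C := by
  by_cases hxC : x ∈ C
  · rw [insert_eq_self.2 hxC]
  by_cases haC : a ∈ C
  · rw [mutcov_zero_of_mem f a b C haC,
      mutcov_zero_of_mem f a b (insert x C) (mem_insert_of_mem haC)]
  by_cases hbC : b ∈ C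
  · rw [mutcov_comm f a b C, mutcov_comm f a b (insert x C),
      mutcov_zero_of_mem f b a C hbC,
      mutcov_zero_of_mem f b a (insert x C) (mem_insert_of_mem hbC)]
  by_cases hax : a = x
  · subst hax
    rw [mutcov_zero_of_mem f a b (insert a C) (mem_insert_self a C)]
    exact mutcov_nonneg f hmono hsub a b C
  by_cases hbx : b = x
  · subst hbx
    rw [mutcov_comm f a b (insert b C), mutcov_zero_of_mem f b a (insert b C) (mem_insert_self b C)]
    exact mutcov_nonneg f hmono hsub a b C
  by_cases hab : a = b
  · subst hab
    have he : ∀ D : Finset V, mutcov f {a} {a} D = margS f {a} D := by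
      intro D; simp [mutcov]
    rw [he, he]
    exact margS_insert_le f hmono hsub a x C
  · have := h3 C {a, b, x} (by
      rw [card_insert_of_notMem (by simp [hab, hax]), card_insert_of_notMem (by simp [hbx])]
      simp)
    rw [setDeriv_tri f a b x C haC hbC hxC hab hax hbx] at this
    linarith

include hmono hsub h3 in
lemma mutcov_union_le (a b : V) (C E : Finset V) :
    mutcov f {a} {b} (C ∪ E) ≤ mutcov f {a} {b} C := by
  induction E using Finset.induction_on with
  | empty => rw [union_empty]
  | @insert x E hxE ih =>
    rw [union_insert]
    exact le_trans (mutcov_insert_le f hmono hsub h3 a b x (C ∪ E)) ih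

include hmono hsub h3 in
lemma margS_diff_le_sum (b : V) (C T : Finset V) :
    margS f {b} C - margS f {b} (C ∪ T) ≤ ∑ s ∈ T, mutcov f {s} {b} C := by
  induction T using Finset.induction_on with
  | empty => simp
  | @insert s T hsT ih =>
    rw [sum_insert hsT, union_insert]
    have h1 : margS f {b} (C ∪ T) - margS f {b} (insert s (C ∪ T)) = mutcov f {s} {b} (C ∪ T) :=
      (mutcov_eq_sub f s b (C ∪ T)).symm
    have h2 : mutcov f {s} {b} (C ∪ T) ≤ mutcov f {s} {b} C :=
      mutcov_union_le f hmono hsub h3 s b C T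
    linarith

end Mono

lemma pref_zero {n : ℕ} (π : Fin n → V) : pref π 0 = ∅ := by
  simp [pref]

lemma pref_succ {n : ℕ} (π : Fin n → V) (i : Fin n) :
    pref π ((i : ℕ) + 1) = insert (π i) (pref π (i : ℕ)) := by
  rw [pref, pref, show (univ.filter fun j : Fin n => (j : ℕ) < (i : ℕ) + 1)
      = insert i (univ.filter fun j : Fin n => (j : ℕ) < (i : ℕ)) from ?_, image_insert]
  ext j
  simp only [mem_insert, mem_filter, mem_univ, true_and, Nat.lt_succ_iff_lt_or_eq, Fin.ext_iff]
  tauto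

lemma mem_pref {n : ℕ} (π : Fin n → V) (q : Fin n) (p : ℕ) (h : (q : ℕ) < p) :
    π q ∈ pref π p :=
  mem_image.2 ⟨q, mem_filter.2 ⟨mem_univ _, h⟩, rfl⟩

lemma tele_sum (F : ℕ → ℝ) {p e : ℕ} (h : p ≤ e) :
    ∑ k ∈ Finset.Ico p e, (F k - F (k + 1)) = F p - F e := by
  induction e, h using Nat.le_induction with
  | base => simp
  | succ e he ih => rw [Finset.sum_Ico_succ_top he, ih]; ring

lemma downset_iff {n : ℕ} (m : Fin n → ℝ) (hm : ∀ i j : Fin n, i ≤ j → m j ≤ m i)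
    (t : ℝ) (i : Fin n) :
    t ≤ m i ↔ (i : ℕ) < (univ.filter fun k : Fin n => t ≤ m k).card := by
  constructor
  · intro h
    have hsub : Finset.Iic i ⊆ univ.filter fun k : Fin n => t ≤ m k := fun j hj =>
      mem_filter.2 ⟨mem_univ _, le_trans h (hm j i (mem_Iic.1 hj))⟩
    have := card_le_card hsub
    rw [Fin.card_Iic] at this; omega
  · intro h
    by_contra hni
    have hsub : (univ.filter fun k : Fin n => t ≤ m k) ⊆ Finset.Iio i := by
      intro j hj
      rw [mem_Iio]
      by_contra hji
      exact hni (le_trans (mem_filter.1 hj).2 (hm i j (not_lt.1 hji)))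
    have := card_le_card hsub
    rw [Fin.card_Iio] at this; omega

end Lemmas

/-- Each level is inexpensive: if `f` is monotone, submodular and `3`-increasing and `π` has
no swaps and no `γ`-moves with respect to the weighted coverage `mff_π`, then for every
`ℓ > 0`, the cost of the level `L_ℓ = {u : γ^ℓ ≤ mff_π(u) < γ^{ℓ+1}}` is at most
`γ²` times the cost of any full cover `S*`. -/
theorem level_cost_bound {V : Type*} [Fintype V] [DecidableEq V]
    (f : Finset V → ℝ)
    (hmono : ∀ A B : Finset V, A ⊆ B → f A ≤ f B)
    (hsub : ∀ A B : Finset V, f (A ∪ B) + f (A ∩ B) ≤ f A + f B)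
    (h3 : ∀ (S A : Finset V), A.card = 3 → 0 ≤ setDeriv f A S)
    (hf0 : f ∅ = 0)
    (c : V → ℝ) (hc : ∀ u : V, 0 < c u)
    (γ : ℝ) (hγ : 1 < γ)
    (π ψ : Fin (Fintype.card V) ≃ V)
    (hψ : ∀ j j' : Fin (Fintype.card V), j ≤ j' → c (ψ j) ≤ c (ψ j'))
    (hNoSwaps : ∀ i j : Fin (Fintype.card V), i ≤ j → mffw f c π ψ j ≤ mffw f c π ψ i)
    (hNoMoves : ∀ p q : Fin (Fintype.card V), p < q →
      ∃ i : Fin (Fintype.card V), p ≤ i ∧ i < q ∧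
        mffwMove f c π ψ p q < γ * mffw f c π ψ i) :
    ∀ ℓ : ℕ, 0 < ℓ → ∀ Sstar : Finset V, f Sstar = f Finset.univ →
      ∑ u ∈ (Finset.univ.filter fun i : Fin (Fintype.card V) =>
          γ ^ ℓ ≤ mffw f c π ψ i ∧ mffw f c π ψ i < γ ^ (ℓ + 1)).image π, c u
        ≤ γ ^ 2 * ∑ u ∈ Sstar, c u := by
  intro ℓ hℓ Sstar hS
  set m : Fin (Fintype.card V) → ℝ := mffw f c π ψ with hm
  have γpos : (0:ℝ) < γ := lt_trans one_pos hγ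
  have cSnn : 0 ≤ ∑ u ∈ Sstar, c u := sum_nonneg fun u _ => (hc u).le
  set p := (univ.filter fun i : Fin (Fintype.card V) => γ ^ (ℓ+1) ≤ m i).card with hp
  set e := (univ.filter fun i : Fin (Fintype.card V) => γ ^ ℓ ≤ m i).card with he
  have hDp : ∀ i : Fin (Fintype.card V), γ ^ (ℓ+1) ≤ m i ↔ (i:ℕ) < p := fun i =>
    downset_iff m hNoSwaps _ i
  have hDe : ∀ i : Fin (Fintype.card V), γ ^ ℓ ≤ m i ↔ (i:ℕ) < e := fun i =>
    downset_iff m hNoSwaps _ i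
  set B := univ.filter (fun i : Fin (Fintype.card V) => γ ^ ℓ ≤ m i ∧ m i < γ ^ (ℓ + 1)) with hBdef
  have hBiff : ∀ i : Fin (Fintype.card V), i ∈ B ↔ p ≤ (i:ℕ) ∧ (i:ℕ) < e := by
    intro i
    rw [hBdef, mem_filter]
    constructor
    · rintro ⟨-, h1, h2⟩
      exact ⟨not_lt.1 fun hh => absurd ((hDp i).2 hh) (not_le.2 h2), (hDe i).1 h1⟩
    · rintro ⟨h1, h2⟩
      exact ⟨mem_univ _, (hDe i).2 h2, not_le.1 fun hh => absurd ((hDp i).1 hh) (not_lt.2 h1)⟩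
  have hgoalL : ∑ u ∈ B.image π, c u = ∑ i ∈ B, c (π i) :=
    sum_image (fun x _ y _ hxy => π.injective hxy)
  rcases B.eq_empty_or_nonempty with hBe | hBne
  · rw [hBe, image_empty, sum_empty]
    exact mul_nonneg (pow_nonneg γpos.le 2) cSnn
  obtain ⟨i0, hi0⟩ := hBne
  have hi0' := (hBiff i0).1 hi0
  have hpn : p < Fintype.card V := lt_of_le_of_lt hi0'.1 i0.isLt
  have hpe : p ≤ e := le_of_lt (lt_of_le_of_lt hi0'.1 hi0'.2)
  have hen : e ≤ Fintype.card V := le_trans (card_filter_le _ _) (by simp)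
  set pF : Fin (Fintype.card V) := ⟨p, hpn⟩ with hpF
  have hpFv : (pF : ℕ) = p := rfl
  have hmp : m pF < γ ^ (ℓ+1) := by
    have hnotlt : ¬ ((pF:ℕ) < p) := by rw [hpFv]; exact lt_irrefl p
    exact not_le.1 fun hh => hnotlt ((hDp pF).1 hh)
  have hmi : ∀ i : Fin (Fintype.card V), pF ≤ i → m i < γ ^ (ℓ+1) := fun i hi =>
    lt_of_le_of_lt (hNoSwaps pF i hi) hmp
  -- Step C: the "move" bound for each element of Sstar
  have hM : ∀ s ∈ Sstar,
      ∑ j : Fin (Fintype.card V), mutcov f {s} {ψ j} (pref (⇑π) p ∪ pref (⇑ψ) (j:ℕ)) / (c s * c (ψ j))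
        ≤ γ ^ (ℓ+2) := by
    intro s _
    set q : Fin (Fintype.card V) := π.symm s with hq
    have hsq : π q = s := π.apply_symm_apply s
    rcases lt_trichotomy (q:ℕ) p with hlt | heq | hgt
    · have hz : ∀ j : Fin (Fintype.card V),
          mutcov f {s} {ψ j} (pref (⇑π) p ∪ pref (⇑ψ) (j:ℕ)) = 0 := fun j =>
        mutcov_zero_of_mem f s (ψ j) _ (mem_union_left _ (hsq ▸ mem_pref (⇑π) q p hlt))
      have hz2 : (∑ j : Fin (Fintype.card V),
          mutcov f {s} {ψ j} (pref (⇑π) p ∪ pref (⇑ψ) (j:ℕ)) / (c s * c (ψ j))) = 0 :=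
        sum_eq_zero fun j _ => by rw [hz j, zero_div]
      rw [hz2]
      exact (pow_pos γpos _).le
    · have hqp : q = pF := Fin.ext heq
      have hs2 : s = π pF := by rw [← hsq, hqp]
      subst hs2
      have hrfl : (∑ j : Fin (Fintype.card V), mutcov f {π pF} {ψ j} (pref (⇑π) p ∪ pref (⇑ψ) (j:ℕ))
          / (c (π pF) * c (ψ j))) = m pF := by
        rw [hm]; simp only [mffw, mfI, hpFv]
      rw [hrfl]
      exact le_trans hmp.le (pow_le_pow_right₀ hγ.le (by omega))
    · have hpq : pF < q := by rw [Fin.lt_def, hpFv]; exact hgt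
      obtain ⟨i, hpi, hiq, hmov⟩ := hNoMoves pF q hpq
      have hrfl : mffwMove f c (⇑π) (⇑ψ) pF q
          = ∑ j : Fin (Fintype.card V), mutcov f {s} {ψ j} (pref (⇑π) p ∪ pref (⇑ψ) (j:ℕ)) / (c s * c (ψ j)) := by
        simp only [mffwMove, hsq, hpFv]
      refine le_of_lt ?_
      calc ∑ j : Fin (Fintype.card V), mutcov f {s} {ψ j} (pref (⇑π) p ∪ pref (⇑ψ) (j:ℕ)) / (c s * c (ψ j))
          = mffwMove f c (⇑π) (⇑ψ) pF q := hrfl.symm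
        _ < γ * m i := hmov
        _ ≤ γ * m pF := by
            have := hNoSwaps pF i hpi
            exact mul_le_mul_of_nonneg_left this γpos.le
        _ < γ * γ ^ (ℓ+1) := by
            exact mul_lt_mul_of_pos_left hmp γpos
        _ = γ ^ (ℓ+2) := by ring
  -- main chain
  set G : Fin (Fintype.card V) → ℕ → ℝ :=
    fun j k => margS f {ψ j} (pref (⇑π) k ∪ pref (⇑ψ) (j:ℕ)) with hGdef
  have hdiv1 : ∀ (x a b : ℝ), a ≠ 0 → x / (a * b) * a = x / b := by
    intro x a b ha
    by_cases hb : b = 0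
    · simp [hb]
    · field_simp
  have hdiv2 : ∀ (x a b : ℝ), a ≠ 0 → a * (x / (a * b)) = x / b := by
    intro x a b ha
    rw [mul_comm]; exact hdiv1 x a b ha
  have step1 : γ ^ ℓ * ∑ i ∈ B, c (π i) ≤ ∑ i ∈ B, m i * c (π i) := by
    rw [mul_sum]
    apply sum_le_sum
    intro i hi
    exact mul_le_mul_of_nonneg_right ((mem_filter.1 hi).2.1) (hc _).le
  have step2 : ∑ i ∈ B, m i * c (π i)
      = ∑ j : Fin (Fintype.card V), (∑ i ∈ B,
          mutcov f {π i} {ψ j} (pref (⇑π) (i:ℕ) ∪ pref (⇑ψ) (j:ℕ))) / c (ψ j) := by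
    have hterm : ∀ i : Fin (Fintype.card V), m i * c (π i)
        = ∑ j : Fin (Fintype.card V), mutcov f {π i} {ψ j} (pref (⇑π) (i:ℕ) ∪ pref (⇑ψ) (j:ℕ)) / c (ψ j) := by
      intro i
      rw [hm]
      simp only [mffw, mfI, sum_mul]
      exact sum_congr rfl fun j _ => hdiv1 _ _ _ (hc (π i)).ne'
    rw [sum_congr rfl fun i _ => hterm i, sum_comm]
    exact sum_congr rfl fun j _ => (sum_div _ _ _).symm
  have step3 : ∀ j : Fin (Fintype.card V),
      ∑ i ∈ B, mutcov f {π i} {ψ j} (pref (⇑π) (i:ℕ) ∪ pref (⇑ψ) (j:ℕ)) = G j p - G j e := by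
    intro j
    have hIco : ∑ i ∈ B, mutcov f {π i} {ψ j} (pref (⇑π) (i:ℕ) ∪ pref (⇑ψ) (j:ℕ))
        = ∑ k ∈ Finset.Ico p e, (G j k - G j (k+1)) := by
      refine Finset.sum_bij' (fun (i : Fin (Fintype.card V)) (_ : i ∈ B) => (i:ℕ))
        (fun k hk => (⟨k, lt_of_lt_of_le (mem_Ico.1 hk).2 hen⟩ : Fin (Fintype.card V)))
        ?_ ?_ ?_ ?_ ?_
      · intro i hi
        exact mem_Ico.2 ⟨((hBiff i).1 hi).1, ((hBiff i).1 hi).2⟩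
      · intro k hk
        exact (hBiff ⟨k, lt_of_lt_of_le (mem_Ico.1 hk).2 hen⟩).2
          ⟨(mem_Ico.1 hk).1, (mem_Ico.1 hk).2⟩
      · intro i hi
        exact Fin.ext rfl
      · intro k hk
        rfl
      · intro i hi
        simp only [hGdef]
        rw [mutcov_eq_sub f (π i) (ψ j), pref_succ (⇑π) i, insert_union]
    rw [hIco, tele_sum _ hpe]
  have step4 : ∀ j : Fin (Fintype.card V), G j p - G j e ≤ G j p := fun j =>
    sub_le_self _ (margS_nonneg f hmono _ _)
  have step5 : ∀ j : Fin (Fintype.card V),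
      G j p ≤ ∑ s ∈ Sstar, mutcov f {s} {ψ j} (pref (⇑π) p ∪ pref (⇑ψ) (j:ℕ)) := by
    intro j
    have hz : margS f {ψ j} ((pref (⇑π) p ∪ pref (⇑ψ) (j:ℕ)) ∪ Sstar) = 0 := by
      have h1 : f Finset.univ ≤ f ((pref (⇑π) p ∪ pref (⇑ψ) (j:ℕ)) ∪ Sstar) :=
        hS ▸ hmono Sstar _ subset_union_right
      have h2 : f ({ψ j} ∪ ((pref (⇑π) p ∪ pref (⇑ψ) (j:ℕ)) ∪ Sstar)) ≤ f Finset.univ :=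
        hmono _ _ (subset_univ _)
      have h4 : f ((pref (⇑π) p ∪ pref (⇑ψ) (j:ℕ)) ∪ Sstar)
          ≤ f ({ψ j} ∪ ((pref (⇑π) p ∪ pref (⇑ψ) (j:ℕ)) ∪ Sstar)) :=
        hmono _ _ subset_union_right
      simp only [margS]; linarith
    have hh := margS_diff_le_sum f hmono hsub h3 (ψ j) (pref (⇑π) p ∪ pref (⇑ψ) (j:ℕ)) Sstar
    rw [hz] at hh
    rw [hGdef]
    simp only
    linarith
  have step6 : ∑ j : Fin (Fintype.card V), (∑ i ∈ B,
        mutcov f {π i} {ψ j} (pref (⇑π) (i:ℕ) ∪ pref (⇑ψ) (j:ℕ))) / c (ψ j)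
      ≤ ∑ j : Fin (Fintype.card V), (∑ s ∈ Sstar,
        mutcov f {s} {ψ j} (pref (⇑π) p ∪ pref (⇑ψ) (j:ℕ))) / c (ψ j) := by
    apply sum_le_sum
    intro j _
    rw [step3 j]
    exact (div_le_div_iff_of_pos_right (hc (ψ j))).2 (le_trans (step4 j) (step5 j))
  have step7 : ∑ j : Fin (Fintype.card V), (∑ s ∈ Sstar,
        mutcov f {s} {ψ j} (pref (⇑π) p ∪ pref (⇑ψ) (j:ℕ))) / c (ψ j)
      = ∑ s ∈ Sstar, c s * (∑ j : Fin (Fintype.card V),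
        mutcov f {s} {ψ j} (pref (⇑π) p ∪ pref (⇑ψ) (j:ℕ)) / (c s * c (ψ j))) := by
    rw [sum_congr rfl fun j (_ : j ∈ univ) => sum_div Sstar _ (c (ψ j)), sum_comm]
    apply sum_congr rfl
    intro s _
    rw [mul_sum]
    exact sum_congr rfl fun j _ => (hdiv2 _ _ _ (hc s).ne').symm
  have step8 : ∑ s ∈ Sstar, c s * (∑ j : Fin (Fintype.card V),
        mutcov f {s} {ψ j} (pref (⇑π) p ∪ pref (⇑ψ) (j:ℕ)) / (c s * c (ψ j)))
      ≤ ∑ s ∈ Sstar, c s * γ ^ (ℓ+2) := by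
    apply sum_le_sum
    intro s hs
    exact mul_le_mul_of_nonneg_left (hM s hs) (hc s).le
  have key : γ ^ ℓ * ∑ i ∈ B, c (π i) ≤ γ ^ (ℓ+2) * ∑ u ∈ Sstar, c u := by
    calc γ ^ ℓ * ∑ i ∈ B, c (π i)
        ≤ ∑ i ∈ B, m i * c (π i) := step1
      _ = _ := step2
      _ ≤ _ := step6
      _ = _ := step7
      _ ≤ ∑ s ∈ Sstar, c s * γ ^ (ℓ+2) := step8
      _ = γ ^ (ℓ+2) * ∑ u ∈ Sstar, c u := by rw [← sum_mul, mul_comm]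
  rw [hgoalL]
  have hfin : γ ^ (ℓ+2) = γ ^ ℓ * γ ^ 2 := by ring
  rw [hfin, mul_assoc] at key
  exact le_of_mul_le_mul_left key (pow_pos γpos ℓ)
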